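/- Let G be a tournament in the family 𝒢 with distinguished vertices x, y and distinguished subset S as in the definition of 𝒢. Then G − S contains no directed (x,y)-path of length 3. -/

import Mathlib

variable {V : Type*}

/-- A tournament: irreflexive, and between any two distinct vertices exactly one arc. -/
def IsTournament (T : V → V → Prop) : Prop :=
  (∀ v, ¬ T v v) ∧ ∀ x y : V, x ≠ y → (T x y ↔ ¬ T y x)

/-- Outdegree of a vertex. -/
noncomputable def outdeg (T : V → V → Prop) (x : V) : ℕ := Nat.card {y : V // T x y}

/-- Indegree of a vertex. -/
noncomputable def indeg (T : V → V → Prop) (x : V) : ℕ := Nat.card {y : V // T y x}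

/-- A tournament is regular if outdegree equals indegree at every vertex. -/
def RegularTournament (T : V → V → Prop) : Prop := ∀ v : V, outdeg T v = indeg T v

/-- There is a directed path of length `k` from `x` to `y` all of whose vertices lie in `D`. -/
def HasPathOn (T : V → V → Prop) (D : Set V) (x y : V) (k : ℕ) : Prop :=
  ∃ f : Fin (k+1) → V, Function.Injective f ∧ f 0 = x ∧ f (Fin.last k) = y ∧
    (∀ i, f i ∈ D) ∧ ∀ i : Fin k, T (f i.castSucc) (f i.succ)

/-- Every vertex of X dominates every vertex of Y. -/
def Dom (T : V → V → Prop) (X Y : Set V) : Prop := ∀ a ∈ X, ∀ b ∈ Y, T a b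

/-- Outdegree within the induced subtournament on `D`. -/
noncomputable def outdegOn (T : V → V → Prop) (D : Set V) (v : V) : ℕ :=
  Nat.card {u : V // u ∈ D ∧ T v u}

/-- Indegree within the induced subtournament on `D`. -/
noncomputable def indegOn (T : V → V → Prop) (D : Set V) (v : V) : ℕ :=
  Nat.card {u : V // u ∈ D ∧ T u v}

/-- The induced subtournament on `D` is regular. -/
def RegularOn (T : V → V → Prop) (D : Set V) : Prop :=
  ∀ v ∈ D, outdegOn T D v = indegOn T D v

/-- `T` (with distinguished vertices x, y and set S) is a member of the family 𝒢:
a regular tournament of order 6k+3 ≥ 9 with vertex set {x,y,z} ∪ A ∪ B ∪ C ∪ S,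
|A| = |C| = 2k−1, |B| = k+2, |S| = k, the subtournaments induced by A, C and
{z} ∪ B ∪ S regular, and A→(B∪S)→C, C→A, C→z→A, x→({y,z}∪A∪S),
({x,z}∪C∪S)→y, y→(A∪B), (B∪C)→x. -/
def FamilyGData (T : V → V → Prop) (x y : V) (S : Set V) : Prop :=
  IsTournament T ∧ RegularTournament T ∧
  ∃ (k : ℕ) (z : V) (A B C : Set V),
    1 ≤ k ∧ Nat.card V = 6 * k + 3 ∧
    A.ncard = 2 * k - 1 ∧ C.ncard = 2 * k - 1 ∧ B.ncard = k + 2 ∧ S.ncard = k ∧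
    x ≠ y ∧ x ≠ z ∧ y ≠ z ∧
    ({x, y, z} ∪ A ∪ B ∪ C ∪ S : Set V) = Set.univ ∧
    List.Pairwise Disjoint [({x, y, z} : Set V), A, B, C, S] ∧
    RegularOn T A ∧ RegularOn T C ∧ RegularOn T ({z} ∪ B ∪ S) ∧
    Dom T A (B ∪ S) ∧ Dom T (B ∪ S) C ∧ Dom T C A ∧
    Dom T C {z} ∧ Dom T {z} A ∧
    Dom T {x} ({y, z} ∪ A ∪ S) ∧ Dom T ({x, z} ∪ C ∪ S) {y} ∧
    Dom T {y} (A ∪ B) ∧ Dom T (B ∪ C) {x}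

/-- If G ∈ 𝒢 with distinguished x, y, S, then G − S has no (x,y)-path of length 3. -/
theorem stmt16 {V : Type*} (T : V → V → Prop) (x y : V) (S : Set V)
    (hG : FamilyGData T x y S) :
    ¬ HasPathOn T {v | v ∉ S} x y 3 := by
  rintro ⟨f, hinj, h0, hlast, hmem, harc⟩
  obtain ⟨⟨hirr, hiff⟩, hreg, k, z, A, B, C, hk, hcard, hAc, hCc, hBc, hSc,
    hxy, hxz, hyz, huniv, hdisj, _, _, _, hABS, hBSC, hCA, hCz, hzA,
    hx, hy', hyAB, hBCx⟩ := hG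
  have asym : ∀ u v, T u v → ¬ T v u := by
    intro u v huv hvu
    by_cases h : u = v
    · subst h; exact hirr u huv
    · exact ((hiff u v h).mp huv) hvu
  set a := f 1 with ha
  set b := f 2 with hb
  have Txa : T x a := by
    have := harc 0
    simpa [h0, show (0 : Fin 3).castSucc = (0 : Fin 4) from rfl,
      show (0 : Fin 3).succ = (1 : Fin 4) from rfl] using this
  have Tab : T a b := by
    have := harc 1
    simpa [show (1 : Fin 3).castSucc = (1 : Fin 4) from rfl,
      show (1 : Fin 3).succ = (2 : Fin 4) from rfl] using this
  have Tby : T b y := by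
    have := harc 2
    rw [← hlast]; exact this
  have haS : a ∉ S := hmem 1
  have hbS : b ∉ S := hmem 2
  have hay : a ≠ y := by
    intro h; rw [← hlast] at h
    have := hinj h
    exact absurd this (by decide)
  have hbx : b ≠ x := by
    intro h; rw [← h0] at h
    have := hinj h
    exact absurd this (by decide)
  have hab : a ≠ b := by
    intro h
    have := hinj h
    exact absurd this (by decide)
  -- locate a
  have haU : a ∈ ({x, y, z} ∪ A ∪ B ∪ C ∪ S : Set V) := huniv ▸ Set.mem_univ a
  have haz : a = z ∨ a ∈ A := by
    rcases haU with ((((hx3 | haA) | haB) | haC) | haS')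
    · rcases hx3 with h | h | h
      · exact absurd (h ▸ Txa) (hirr x)
      · exact absurd h hay
      · exact Or.inl h
    · exact Or.inr haA
    · exact absurd Txa (asym a x (hBCx a (Or.inl haB) x rfl))
    · exact absurd Txa (asym a x (hBCx a (Or.inr haC) x rfl))
    · exact absurd haS' haS
  have hbU : b ∈ ({x, y, z} ∪ A ∪ B ∪ C ∪ S : Set V) := huniv ▸ Set.mem_univ b
  have hbz : b = x ∨ b = z ∨ b ∈ C := by
    rcases hbU with ((((hx3 | hbA) | hbB) | hbC) | hbS')
    · rcases hx3 with h | h | h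
      · exact Or.inl h
      · exact absurd (h ▸ Tby) (hirr y)
      · exact Or.inr (Or.inl h)
    · exact absurd Tby (asym y b (hyAB y rfl b (Or.inl hbA)))
    · exact absurd Tby (asym y b (hyAB y rfl b (Or.inr hbB)))
    · exact Or.inr (Or.inr hbC)
    · exact absurd hbS' hbS
  rcases haz with haz | haA
  · rcases hbz with h | h | hbC
    · exact asym x z (hx x rfl z (Or.inl (Or.inl (Or.inr rfl))))
        (by rw [← haz, ← h]; exact Tab)
    · exact hab (haz.trans h.symm)
    · exact asym a b Tab (haz ▸ hCz b hbC z rfl)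
  · rcases hbz with h | h | hbC
    · exact asym x a (hx x rfl a (Or.inl (Or.inr haA))) (h ▸ Tab)
    · exact asym a b Tab (h ▸ hzA z rfl a haA)
    · exact asym a b Tab (hCA b hbC a haA)
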